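/- Let G be a locally compact group, X₀, …, Xₙ G-spaces with the data domain X := X₀ carrying a G-invariant measure, Ξ₁, …, Ξₙ G-spaces with G-invariant measures, and Y := Xₙ a separable Hilbert space with a unitary representation μ : G → U(Y). Let φᵢ, ψᵢ : X_{i−1} × Ξᵢ → Xᵢ be joint-G-equivariant feature maps, Ξ_{1:n} := Ξ₁ × ⋯ × Ξₙ with component-wise G-action and product measure, and φ_{1:n}(x, ξ_{1:n}) := φₙ(·, ξₙ) ∘ ⋯ ∘ φ₁(x, ξ₁) (similarly ψ_{1:n}). Define the deep machine S[γ](x) := ∫_{Ξ_{1:n}} γ(ξ_{1:n}) φ_{1:n}(x, ξ_{1:n}) dξ_{1:n} and the deep ridgelet transform R[f](ξ_{1:n}) := ∫_X ⟨f(x), ψ_{1:n}(x, ξ_{1:n})⟩_Y dx. Assume S ∘ R is a well-defined bounded linear operator on L²(X;Y) and the representation π_g[f](x) := μ_g(f(g⁻¹·x)) on L²(X;Y) is irreducible. Then there exists a constant C ∈ ℂ such that S[R[f]] = C · f for every f ∈ L²(X;Y). -/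

import Mathlib

open MeasureTheory ContinuousLinearMap
open scoped ENNReal

section Schur

variable {H : Type*} [NormedAddCommGroup H] [InnerProductSpace ℂ H] [CompleteSpace H]
variable {G : Type*} [Group G]

omit [Group G] in
/-- Everything in the elemental star algebra of `B` commutes with any family of
operators that commutes with `B` and is closed under `star`. -/
lemma commute_of_mem_elemental (u : G → (H →L[ℂ] H))
    (hu : ∀ g, ∃ g', u g = star (u g'))
    (B : H →L[ℂ] H) (hB : ∀ g, Commute (u g) B)
    {x : H →L[ℂ] H} (hx : x ∈ StarAlgebra.elemental ℂ B) :
    ∀ g, Commute (u g) x := by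
  let S : StarSubalgebra ℂ (H →L[ℂ] H) :=
  { carrier := {y | ∀ g, Commute (u g) y}
    mul_mem' := fun hy hz g => (hy g).mul_right (hz g)
    add_mem' := fun hy hz g => (hy g).add_right (hz g)
    one_mem' := fun g => Commute.one_right _
    algebraMap_mem' := fun r g => (Algebra.commutes r (u g)).symm
    star_mem' := by
      intro y hy g
      obtain ⟨g', hg'⟩ := hu g
      rw [hg']
      exact ((hy g').star_star) }
  have hSclosed : IsClosed (S : Set (H →L[ℂ] H)) := by
    have : (S : Set (H →L[ℂ] H)) = ⋂ g, {y | u g * y = y * u g} := by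
      ext y; simp only [Set.mem_iInter, Set.mem_setOf_eq]; exact Iff.rfl
    rw [this]
    exact isClosed_iInter fun g =>
      isClosed_eq (continuous_const.mul continuous_id) (continuous_id.mul continuous_const)
  exact StarAlgebra.elemental.le_of_mem hSclosed (fun g => hB g) hx

lemma cfc_mem_elemental' (B : H →L[ℂ] H) [IsStarNormal B] (f : ℂ → ℂ) :
    cfc f B ∈ StarAlgebra.elemental ℂ B := by
  by_cases hf : ContinuousOn f (spectrum ℂ B)
  · rw [cfc_apply f B, cfcHom_eq_of_isStarNormal]
    exact SetLike.coe_mem _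
  · rw [cfc_apply_of_not_continuousOn B hf]
    exact zero_mem _

lemma selfadjoint_scalar [Nontrivial H] (U : G →* (H ≃ₗᵢ[ℂ] H))
    (hirr : ∀ V : Submodule ℂ H, IsClosed (V : Set H) →
      (∀ (g : G) (f : H), f ∈ V → U g f ∈ V) → V = ⊥ ∨ V = ⊤)
    (u : G → (H →L[ℂ] H)) (hucoe : ∀ g x, u g x = U g x)
    (hu : ∀ g, ∃ g', u g = star (u g'))
    (B : H →L[ℂ] H) (hBsa : IsSelfAdjoint B) (hB : ∀ g, Commute (u g) B) :
    ∃ c : ℂ, B = algebraMap ℂ _ c := by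
  haveI : IsStarNormal B := hBsa.isStarNormal
  -- the spectrum is a subsingleton
  have hsub : (spectrum ℂ B).Subsingleton := by
    by_contra hns
    obtain ⟨a, ha, b, hb, hab⟩ := Set.not_subsingleton_iff.mp hns
    set r : ℝ := dist a b / 2 with hr
    have hrpos : 0 < r := by rw [hr]; have := dist_pos.mpr hab; linarith
    set f : ℂ → ℂ := fun z => ((max (1 - dist z a / r) 0 : ℝ) : ℂ) with hf
    set g : ℂ → ℂ := fun z => ((max (1 - dist z b / r) 0 : ℝ) : ℂ) with hg
    have hfc : Continuous f := Complex.continuous_ofReal.comp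
      ((continuous_const.sub ((continuous_id.dist continuous_const).div_const r)).max
        continuous_const)
    have hgc : Continuous g := Complex.continuous_ofReal.comp
      ((continuous_const.sub ((continuous_id.dist continuous_const).div_const r)).max
        continuous_const)
    have hfa : f a = 1 := by simp [hf]
    have hgb : g b = 1 := by simp [hg]
    have hfg : ∀ z, f z * g z = 0 := by
      intro z
      rcases lt_or_ge (dist z a) r with h | h
      · have h2 : r ≤ dist z b := by
          have := dist_triangle a z b
          rw [dist_comm a z] at this
          have h3 : dist a b = 2 * r := by rw [hr]; ring
          linarith
        have : g z = 0 := by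
          simp only [hg, Complex.ofReal_eq_zero, max_eq_right_iff]
          have : (1 : ℝ) - dist z b / r ≤ 0 := by
            rw [sub_nonpos, le_div_iff₀ hrpos]; linarith
          linarith
        rw [this, mul_zero]
      · have : f z = 0 := by
          simp only [hf, Complex.ofReal_eq_zero, max_eq_right_iff]
          have : (1 : ℝ) - dist z a / r ≤ 0 := by
            rw [sub_nonpos, le_div_iff₀ hrpos]; linarith
          linarith
        rw [this, zero_mul]
    set P : H →L[ℂ] H := cfc f B with hP
    set Q : H →L[ℂ] H := cfc g B with hQ
    have hP0 : P ≠ 0 := by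
      intro h
      rw [hP, ← cfc_zero ℂ B] at h
      have := eqOn_of_cfc_eq_cfc h
      have h1 := this ha
      rw [hfa] at h1
      exact one_ne_zero h1
    have hQ0 : Q ≠ 0 := by
      intro h
      rw [hQ, ← cfc_zero ℂ B] at h
      have := eqOn_of_cfc_eq_cfc h
      have h1 := this hb
      rw [hgb] at h1
      exact one_ne_zero h1
    have hPQ : P * Q = 0 := by
      rw [hP, hQ, ← cfc_mul f g B hfc.continuousOn hgc.continuousOn]
      have : (fun z => f z * g z) = fun _ : ℂ => (0 : ℂ) := funext hfg
      rw [this]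
      simpa using cfc_const (0 : ℂ) B
    have hQP : Q * P = 0 := by
      rw [(cfc_commute_cfc f g B).symm.eq, hPQ]
    have hPcomm : ∀ g', Commute (u g') P :=
      commute_of_mem_elemental u hu B hB (cfc_mem_elemental' B f)
    -- the invariant subspace
    set V : Submodule ℂ H := (LinearMap.range (P : H →ₗ[ℂ] H)).topologicalClosure with hV
    have hVclosed : IsClosed (V : Set H) := Submodule.isClosed_topologicalClosure _
    have hVinv : ∀ (g' : G) (v : H), v ∈ V → U g' v ∈ V := by
      intro g' v hv
      have hv' : v ∈ closure (LinearMap.range (P : H →ₗ[ℂ] H) : Set H) := hv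
      have h1 : U g' v ∈ (u g') '' closure (LinearMap.range (P : H →ₗ[ℂ] H) : Set H) :=
        ⟨v, hv', (hucoe g' v)⟩
      have h2 : (u g') '' closure (LinearMap.range (P : H →ₗ[ℂ] H) : Set H) ⊆
          closure ((u g') '' (LinearMap.range (P : H →ₗ[ℂ] H) : Set H)) :=
        image_closure_subset_closure_image (u g').continuous
      have h3 : (u g') '' (LinearMap.range (P : H →ₗ[ℂ] H) : Set H) ⊆ (LinearMap.range (P : H →ₗ[ℂ] H) : Set H) := by
        rintro _ ⟨_, ⟨x, rfl⟩, rfl⟩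
        refine ⟨u g' x, ?_⟩
        have := (hPcomm g').eq
        calc P (u g' x) = (P * u g') x := rfl
          _ = (u g' * P) x := by rw [this]
          _ = u g' (P x) := rfl
      exact (closure_mono h3) (h2 h1)
    rcases hirr V hVclosed hVinv with hbot | htop
    · -- V = ⊥ contradicts P ≠ 0
      apply hP0
      ext x
      have : P x ∈ V := Submodule.le_topologicalClosure _ ⟨x, rfl⟩
      rw [hbot] at this
      simpa using this
    · -- V = ⊤ contradicts Q ≠ 0
      apply hQ0
      ext w
      have hw : w ∈ V := by rw [htop]; trivial
      have hw' : w ∈ closure (LinearMap.range (P : H →ₗ[ℂ] H) : Set H) := hw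
      have hker : (LinearMap.range (P : H →ₗ[ℂ] H) : Set H) ⊆ {x | Q x = 0} := by
        rintro _ ⟨x, rfl⟩
        calc Q (P x) = (Q * P) x := rfl
          _ = 0 := by rw [hQP]; rfl
      have hclosed : IsClosed {x : H | Q x = 0} :=
        isClosed_eq Q.continuous continuous_const
      have := closure_minimal hker hclosed hw'
      simpa using this
  obtain ⟨c, hc⟩ := spectrum.nonempty B
  refine ⟨c, ?_⟩
  calc B = cfc (id : ℂ → ℂ) B := (cfc_id ℂ B).symm
    _ = cfc (fun _ => c) B := cfc_congr fun x hx => hsub hx hc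
    _ = algebraMap ℂ _ c := cfc_const c B

end Schur

section Schur3
variable {H : Type*} [NormedAddCommGroup H] [InnerProductSpace ℂ H] [CompleteSpace H]
variable {G : Type*} [Group G]

lemma schur_lemma (U : G →* (H ≃ₗᵢ[ℂ] H))
    (hirr : ∀ V : Submodule ℂ H, IsClosed (V : Set H) →
      (∀ (g : G) (f : H), f ∈ V → U g f ∈ V) → V = ⊥ ∨ V = ⊤)
    (T : H →L[ℂ] H) (hcomm : ∀ (g : G) (f : H), T (U g f) = U g (T f)) :
    ∃ C : ℂ, ∀ f : H, T f = C • f := by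
  rcases subsingleton_or_nontrivial H with hs | hn
  · exact ⟨0, fun f => Subsingleton.elim _ _⟩
  -- the unitaries as continuous linear maps
  set u : G → (H →L[ℂ] H) := fun g => ((U g).toContinuousLinearEquiv : H →L[ℂ] H) with hu_def
  have hucoe : ∀ g x, u g x = U g x := fun g x => rfl
  have hUmul : ∀ (g h : G) (x : H), U g (U h x) = U (g * h) x := by
    intro g h x
    rw [map_mul U g h]
    rfl
  have hstar : ∀ g, star (u g) = u g⁻¹ := by
    intro g
    rw [star_eq_adjoint]
    symm
    refine ((eq_adjoint_iff _ _).mpr fun x y => ?_)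
    calc (inner ℂ (u g⁻¹ x) y : ℂ) = inner ℂ (U g⁻¹ x) y := by rw [hucoe]
      _ = inner ℂ (U g (U g⁻¹ x)) (U g y) := ((U g).inner_map_map _ _).symm
      _ = inner ℂ x (U g y) := by rw [hUmul, mul_inv_cancel, map_one]; rfl
      _ = inner ℂ x (u g y) := by rw [hucoe]
  have hu : ∀ g, ∃ g', u g = star (u g') := by
    intro g
    exact ⟨g⁻¹, by rw [hstar g⁻¹, inv_inv]⟩
  have huT : ∀ g, Commute (u g) T := by
    intro g
    ext x
    show u g (T x) = T (u g x)
    rw [hucoe, hucoe, hcomm]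
  have huTstar : ∀ g, Commute (u g) (star T) := by
    intro g
    have h1 : Commute (u g⁻¹) T := huT g⁻¹
    have h2 := congrArg star h1.eq
    rw [star_mul, star_mul, hstar, inv_inv] at h2
    exact h2.symm
  -- decompose T into self-adjoint parts
  set B₁ : H →L[ℂ] H := T + star T with hB₁
  set B₂ : H →L[ℂ] H := Complex.I • (T - star T) with hB₂
  have hB₁sa : IsSelfAdjoint B₁ := by
    rw [hB₁]
    exact IsSelfAdjoint.add_star_self T
  have hB₂sa : IsSelfAdjoint B₂ := by
    rw [hB₂, IsSelfAdjoint, star_smul, star_sub, star_star]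
    simp only [Complex.star_def, Complex.conj_I]
    rw [neg_smul, smul_sub, smul_sub, neg_sub]
  have hB₁c : ∀ g, Commute (u g) B₁ := fun g => (huT g).add_right (huTstar g)
  have hB₂c : ∀ g, Commute (u g) B₂ := fun g =>
    Commute.smul_right ((huT g).sub_right (huTstar g)) Complex.I
  obtain ⟨c₁, hc₁⟩ := selfadjoint_scalar U hirr u hucoe hu B₁ hB₁sa hB₁c
  obtain ⟨c₂, hc₂⟩ := selfadjoint_scalar U hirr u hucoe hu B₂ hB₂sa hB₂c
  refine ⟨(c₁ - Complex.I * c₂) / 2, fun f => ?_⟩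
  have key : (2 : ℂ) • T = B₁ - Complex.I • B₂ := by
    rw [hB₁, hB₂, smul_smul, Complex.I_mul_I]
    module
  have key2 : (2 : ℂ) • T f = c₁ • f - Complex.I • (c₂ • f) := by
    have := congrArg (fun A : H →L[ℂ] H => A f) key
    simp only [ContinuousLinearMap.smul_apply, ContinuousLinearMap.sub_apply] at this
    rw [this, hc₁, hc₂]
    simp [Algebra.algebraMap_eq_smul_one]
  have h2 : T f = (2 : ℂ)⁻¹ • ((2 : ℂ) • T f) := by
    rw [smul_smul]
    norm_num
  rw [h2, key2, smul_sub, smul_smul, smul_smul, smul_smul, div_eq_mul_inv]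
  module

end Schur3

open MeasureTheory

theorem statement7
    {G : Type*} [Group G] [TopologicalSpace G] [IsTopologicalGroup G]
    [LocallyCompactSpace G]
    (n : ℕ) (Xs : ℕ → Type*) (Ξs : ℕ → Type*)
    [∀ i, MulAction G (Xs i)] [∀ i, MulAction G (Ξs i)]
    [MeasurableSpace (Xs 0)] (μX : Measure (Xs 0))
    (hμX : ∀ g : G, MeasurePreserving (fun x : Xs 0 => g • x) μX μX)
    [∀ i, MeasurableSpace (Ξs i)] (μΞ : ∀ i, Measure (Ξs i))
    [∀ i, SigmaFinite (μΞ i)]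
    (hμΞ : ∀ (i : ℕ) (g : G), MeasurePreserving (fun ξ : Ξs i => g • ξ) (μΞ i) (μΞ i))
    [NormedAddCommGroup (Xs n)] [InnerProductSpace ℂ (Xs n)] [CompleteSpace (Xs n)]
    [TopologicalSpace.SeparableSpace (Xs n)]
    (ρ : G →* (Xs n ≃ₗᵢ[ℂ] Xs n))
    (hρ : ∀ (g : G) (y : Xs n), g • y = ρ g y)
    (φ ψ : ∀ i : ℕ, Xs i → Ξs i → Xs (i + 1))
    (hφ : ∀ (i : ℕ) (g : G) (x : Xs i) (ξ : Ξs i), φ i (g • x) (g • ξ) = g • φ i x ξ)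
    (hψ : ∀ (i : ℕ) (g : G) (x : Xs i) (ξ : Ξs i), ψ i (g • x) (g • ξ) = g • ψ i x ξ)
    -- the depth-n compositions `Φ = φ_{1:n}` and `Ψ = ψ_{1:n}`
    (Φ Ψ : ∀ k : ℕ, Xs 0 → (∀ i : Fin n, Ξs i) → Xs k)
    (hΦ0 : ∀ x ξ, Φ 0 x ξ = x) (hΨ0 : ∀ x ξ, Ψ 0 x ξ = x)
    (hΦs : ∀ (k : ℕ) (hk : k < n) x ξ, Φ (k + 1) x ξ = φ k (Φ k x ξ) (ξ ⟨k, hk⟩))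
    (hΨs : ∀ (k : ℕ) (hk : k < n) x ξ, Ψ (k + 1) x ξ = ψ k (Ψ k x ξ) (ξ ⟨k, hk⟩))
    -- the composite operator `T = S ∘ R` is a well-defined bounded linear operator
    (T : Lp (Xs n) 2 μX →L[ℂ] Lp (Xs n) 2 μX)
    (hT : ∀ f : Lp (Xs n) 2 μX,
      ⇑(T f) =ᵐ[μX] fun x =>
        ∫ ξ : ∀ i : Fin n, Ξs i,
          (∫ x', (inner ℂ (f x') (Ψ n x' ξ) : ℂ) ∂μX) • Φ n x ξ
            ∂(Measure.pi fun i : Fin n => μΞ i))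
    -- the unitary representation `π` of `G` on `L²(X;Y)`
    (Pi : G →* (Lp (Xs n) 2 μX ≃ₗᵢ[ℂ] Lp (Xs n) 2 μX))
    (hPi : ∀ (g : G) (f : Lp (Xs n) 2 μX),
      ⇑(Pi g f) =ᵐ[μX] fun x => g • (f (g⁻¹ • x)))
    -- irreducibility of `π`
    (hirr : ∀ V : Submodule ℂ (Lp (Xs n) 2 μX), IsClosed (V : Set (Lp (Xs n) 2 μX)) →
      (∀ (g : G) (f : Lp (Xs n) 2 μX), f ∈ V → Pi g f ∈ V) → V = ⊥ ∨ V = ⊤) :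
    ∃ C : ℂ, ∀ f : Lp (Xs n) 2 μX, T f = C • f := by
  -- equivariance of the composite feature maps
  have hΨe : ∀ (g : G) (k : ℕ), k ≤ n → ∀ (x : Xs 0) (ξ : ∀ i : Fin n, Ξs i),
      Ψ k (g • x) (g • ξ) = g • Ψ k x ξ := by
    intro g k
    induction k with
    | zero => intro _ x ξ; rw [hΨ0, hΨ0]
    | succ k ih =>
      intro hk x ξ
      have hkn : k < n := Nat.lt_of_succ_le hk
      have hcomp : (g • ξ) (⟨k, hkn⟩ : Fin n) = g • (ξ ⟨k, hkn⟩) := rfl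
      rw [hΨs k hkn, hΨs k hkn, ih (Nat.le_of_succ_le hk) x ξ, hcomp, hψ]
  have hΦe : ∀ (g : G) (k : ℕ), k ≤ n → ∀ (x : Xs 0) (ξ : ∀ i : Fin n, Ξs i),
      Φ k (g • x) (g • ξ) = g • Φ k x ξ := by
    intro g k
    induction k with
    | zero => intro _ x ξ; rw [hΦ0, hΦ0]
    | succ k ih =>
      intro hk x ξ
      have hkn : k < n := Nat.lt_of_succ_le hk
      have hcomp : (g • ξ) (⟨k, hkn⟩ : Fin n) = g • (ξ ⟨k, hkn⟩) := rfl
      rw [hΦs k hkn, hΦs k hkn, ih (Nat.le_of_succ_le hk) x ξ, hcomp, hφ]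
  -- measurable自equivalences given by the action
  let eX : G → (Xs 0 ≃ᵐ Xs 0) := fun g =>
    { toFun := fun x => g • x
      invFun := fun x => g⁻¹ • x
      left_inv := fun x => inv_smul_smul g x
      right_inv := fun x => smul_inv_smul g x
      measurable_toFun := (hμX g).measurable
      measurable_invFun := (hμX g⁻¹).measurable }
  have hmuPre : ∀ g : G, MeasurePreserving (fun ξ : ∀ i : Fin n, Ξs i => g • ξ)
      (Measure.pi fun i : Fin n => μΞ i) (Measure.pi fun i : Fin n => μΞ i) := fun g =>
    MeasureTheory.measurePreserving_pi _ _ fun i : Fin n => hμΞ i g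
  let eΞ : G → ((∀ i : Fin n, Ξs i) ≃ᵐ (∀ i : Fin n, Ξs i)) := fun g =>
    { toFun := fun ξ => g • ξ
      invFun := fun ξ => g⁻¹ • ξ
      left_inv := fun ξ => inv_smul_smul g ξ
      right_inv := fun ξ => smul_inv_smul g ξ
      measurable_toFun := (hmuPre g).measurable
      measurable_invFun := (hmuPre g⁻¹).measurable }
  -- the operator commutes with the representation
  have hcomm : ∀ (g : G) (f : Lp (Xs n) 2 μX), T (Pi g f) = Pi g (T f) := by
    intro g f
    apply Lp.ext (p := (2 : ℝ≥0∞)) (μ := μX)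
    -- Step A : the ridgelet transform is equivariant
    have hA : ∀ ξ : ∀ i : Fin n, Ξs i,
        (∫ x', (inner ℂ ((Pi g f) x') (Ψ n x' ξ) : ℂ) ∂μX)
          = ∫ x', (inner ℂ (f x') (Ψ n x' (g⁻¹ • ξ)) : ℂ) ∂μX := by
      intro ξ
      calc ∫ x', (inner ℂ ((Pi g f) x') (Ψ n x' ξ) : ℂ) ∂μX
          = ∫ x', (inner ℂ (g • (f (g⁻¹ • x'))) (Ψ n x' ξ) : ℂ) ∂μX :=
            integral_congr_ae ((hPi g f).mono fun x' hx' => by simp only [hx'])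
        _ = ∫ x', (inner ℂ (g • (f (g⁻¹ • (g • x')))) (Ψ n (g • x') ξ) : ℂ) ∂μX :=
            ((hμX g).integral_comp (eX g).measurableEmbedding
              (fun x' => (inner ℂ (g • (f (g⁻¹ • x'))) (Ψ n x' ξ) : ℂ))).symm
        _ = ∫ x', (inner ℂ (f x') (Ψ n x' (g⁻¹ • ξ)) : ℂ) ∂μX := by
            refine integral_congr_ae (Filter.Eventually.of_forall fun x' => ?_)
            beta_reduce
            rw [inv_smul_smul]
            have h1 : Ψ n (g • x') ξ = g • Ψ n x' (g⁻¹ • ξ) := by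
              conv_lhs => rw [← smul_inv_smul g ξ]
              exact hΨe g n le_rfl x' (g⁻¹ • ξ)
            rw [h1, hρ, hρ]
            exact (ρ g).inner_map_map _ _
    -- Step B : the reconstruction is equivariant
    have hB : ∀ x : Xs 0,
        (∫ ξ, (∫ x', (inner ℂ (f x') (Ψ n x' (g⁻¹ • ξ)) : ℂ) ∂μX) • Φ n x ξ
            ∂(Measure.pi fun i : Fin n => μΞ i))
          = g • (∫ ξ, (∫ x', (inner ℂ (f x') (Ψ n x' ξ) : ℂ) ∂μX) • Φ n (g⁻¹ • x) ξ
              ∂(Measure.pi fun i : Fin n => μΞ i)) := by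
      intro x
      calc ∫ ξ, (∫ x', (inner ℂ (f x') (Ψ n x' (g⁻¹ • ξ)) : ℂ) ∂μX) • Φ n x ξ
              ∂(Measure.pi fun i : Fin n => μΞ i)
          = ∫ ξ, (∫ x', (inner ℂ (f x') (Ψ n x' (g⁻¹ • (g • ξ))) : ℂ) ∂μX) • Φ n x (g • ξ)
              ∂(Measure.pi fun i : Fin n => μΞ i) :=
            ((hmuPre g).integral_comp (eΞ g).measurableEmbedding
              (fun ξ => (∫ x', (inner ℂ (f x') (Ψ n x' (g⁻¹ • ξ)) : ℂ) ∂μX) • Φ n x ξ)).symm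
        _ = ∫ ξ, (ρ g).toLinearIsometry
              ((∫ x', (inner ℂ (f x') (Ψ n x' ξ) : ℂ) ∂μX) • Φ n (g⁻¹ • x) ξ)
              ∂(Measure.pi fun i : Fin n => μΞ i) := by
            refine integral_congr_ae (Filter.Eventually.of_forall fun ξ => ?_)
            beta_reduce
            rw [inv_smul_smul]
            have h1 : Φ n x (g • ξ) = g • Φ n (g⁻¹ • x) ξ := by
              conv_lhs => rw [← smul_inv_smul g x]
              exact hΦe g n le_rfl (g⁻¹ • x) ξ
            rw [h1, hρ]
            rw [_root_.map_smul]
            rfl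
        _ = (ρ g).toLinearIsometry
              (∫ ξ, (∫ x', (inner ℂ (f x') (Ψ n x' ξ) : ℂ) ∂μX) • Φ n (g⁻¹ • x) ξ
                ∂(Measure.pi fun i : Fin n => μΞ i)) :=
            (ρ g).toLinearIsometry.integral_comp_comm _
        _ = g • (∫ ξ, (∫ x', (inner ℂ (f x') (Ψ n x' ξ) : ℂ) ∂μX) • Φ n (g⁻¹ • x) ξ
              ∂(Measure.pi fun i : Fin n => μΞ i)) := by rw [hρ]; rfl
    -- assemble the almost-everywhere equalities
    have e1 := hT (Pi g f)
    have e2 : (fun x => ∫ ξ, (∫ x', (inner ℂ ((Pi g f) x') (Ψ n x' ξ) : ℂ) ∂μX) • Φ n x ξ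
          ∂(Measure.pi fun i : Fin n => μΞ i))
        = fun x => g • ((fun y => ∫ ξ, (∫ x', (inner ℂ (f x') (Ψ n x' ξ) : ℂ) ∂μX) • Φ n y ξ
            ∂(Measure.pi fun i : Fin n => μΞ i)) (g⁻¹ • x)) := by
      funext x
      rw [show (∫ ξ, (∫ x', (inner ℂ ((Pi g f) x') (Ψ n x' ξ) : ℂ) ∂μX) • Φ n x ξ
            ∂(Measure.pi fun i : Fin n => μΞ i))
          = ∫ ξ, (∫ x', (inner ℂ (f x') (Ψ n x' (g⁻¹ • ξ)) : ℂ) ∂μX) • Φ n x ξ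
            ∂(Measure.pi fun i : Fin n => μΞ i) from
        integral_congr_ae (Filter.Eventually.of_forall fun ξ => by beta_reduce; rw [hA ξ])]
      exact hB x
    have e3 : (fun x => g • ((fun y => ∫ ξ, (∫ x', (inner ℂ (f x') (Ψ n x' ξ) : ℂ) ∂μX) • Φ n y ξ
            ∂(Measure.pi fun i : Fin n => μΞ i)) (g⁻¹ • x)))
        =ᵐ[μX] fun x => g • ((T f) (g⁻¹ • x)) := by
      have hq : Measure.QuasiMeasurePreserving (fun x : Xs 0 => g⁻¹ • x) μX μX :=
        (hμX g⁻¹).quasiMeasurePreserving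
      have h4 := hq.ae_eq_comp (hT f).symm
      exact h4.mono fun x hx => by
        simp only [Function.comp] at hx
        beta_reduce
        rw [hx]
    exact (e1.trans ((Filter.EventuallyEq.of_eq e2).trans e3)).trans (hPi g (T f)).symm
  exact schur_lemma Pi hirr T hcomm
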